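/- Correctness of the symmetry-based attack (Algorithm 2): let σ : S → S be a map whose pushforward preserves the initial distribution, p0.map σ = p0. Define the adversary ν^σ by: ν^σ_0(s_0) is the point mass at σ(s_0), and for every 1 ≤ t ≤ T, ν^σ_t(s_{≤t}, o_{<t}, a_{<t}) = p(o_{t−1}, a_{t−1}) (i.e. the observation o_t is drawn from the true transition kernel applied to the previous observation and the previous action, independently of the true states). Then for every victim policy π, the victim's observation-process distribution in the attacked environment equals the unattacked trajectory distribution: ρ_v(ν^σ, π) = ρ_v(π) as PMFs on (Fin (T+1) → S) × (Fin (T+1) → A). -/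

import Mathlib

/-- A victim policy: at time `t ≤ T`, maps the observation prefix `o_{≤ t}` and the
action prefix `a_{< t}` to a distribution over the action `a_t`. -/
def Pol (T : ℕ) (S A : Type) : Type :=
  (t : Fin (T + 1)) → (Fin (t.1 + 1) → S) → (Fin t.1 → A) → PMF A

/-- An adversary: at time `t ≤ T`, maps the true-state prefix `s_{≤ t}`, the past
observations `o_{< t}` and past actions `a_{< t}` to a distribution over `o_t`. -/
def Adv (T : ℕ) (S A : Type) : Type :=
  (t : Fin (T + 1)) → (Fin (t.1 + 1) → S) → (Fin t.1 → S) → (Fin t.1 → A) → PMF S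

/-- The prefix `x_{≤ t}` of a sequence `x`. -/
def upTo {T : ℕ} {X : Type} (x : Fin (T + 1) → X) (t : Fin (T + 1)) : Fin (t.1 + 1) → X :=
  fun i => x ⟨i.1, by have h1 := i.2; have h2 := t.2; omega⟩

/-- The strict prefix `x_{< t}` of a sequence `x`. -/
def below {T : ℕ} {X : Type} (x : Fin (T + 1) → X) (t : Fin (T + 1)) : Fin t.1 → X :=
  fun i => x ⟨i.1, by have h1 := i.2; have h2 := t.2; omega⟩

/-- Density of the attacked joint trajectory distribution `ρ_a(ν, π)` at `(s, o, a)`. -/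
noncomputable def rhoA {T : ℕ} {S A : Type} (p0 : PMF S) (p : S → A → PMF S)
    (ν : Adv T S A) (π : Pol T S A)
    (s o : Fin (T + 1) → S) (a : Fin (T + 1) → A) : ENNReal :=
  ∏ t : Fin (T + 1),
    (if t.1 = 0 then p0 (s t)
      else p (s ⟨t.1 - 1, by have := t.2; omega⟩) (a ⟨t.1 - 1, by have := t.2; omega⟩) (s t)) *
    ν t (upTo s t) (below o t) (below a t) (o t) *
    π t (upTo o t) (below a t) (a t)

/-- Density of the unattacked trajectory distribution `ρ_v(π)` at `(s, a)`. -/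
noncomputable def rhoV {T : ℕ} {S A : Type} (p0 : PMF S) (p : S → A → PMF S)
    (π : Pol T S A) (s : Fin (T + 1) → S) (a : Fin (T + 1) → A) : ENNReal :=
  ∏ t : Fin (T + 1),
    (if t.1 = 0 then p0 (s t)
      else p (s ⟨t.1 - 1, by have := t.2; omega⟩) (a ⟨t.1 - 1, by have := t.2; omega⟩) (s t)) *
    π t (upTo s t) (below a t) (a t)

/-- The symmetry-based adversary `ν^σ` of Algorithm 2: at time `0` it outputs the point
mass at `σ(s_0)`, and at each time `1 ≤ t ≤ T` the observation `o_t` is drawn from the true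
transition kernel applied to the previous observation and previous action,
`ν^σ_t(s_{≤t}, o_{<t}, a_{<t}) = p(o_{t-1}, a_{t-1})`, independently of the true states. -/
noncomputable def advSigma {T : ℕ} {S A : Type} (p : S → A → PMF S) (σ : S → S) :
    Adv T S A :=
  fun t sp op ap =>
    if h : t.1 = 0 then PMF.pure (σ (sp (Fin.last t.1)))
    else p (op ⟨t.1 - 1, by omega⟩) (ap ⟨t.1 - 1, by omega⟩)

/-- Correctness of the symmetry-based attack (Algorithm 2): if the
pushforward of the initial distribution under `σ` preserves it, `p0.map σ = p0`, then for
every victim policy `π` the victim's observation-process distribution in the attacked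
environment equals the unattacked trajectory distribution, `ρ_v(ν^σ, π) = ρ_v(π)` as PMFs
on `(Fin (T+1) → S) × (Fin (T+1) → A)` (stated pointwise via the densities). -/
lemma chain_sum {S : Type} [Fintype S] (n : ℕ) (q : Fin n → S → S → ENNReal)
    (hq : ∀ t x, ∑ y, q t x y = 1) (h : S → ENNReal) :
    ∑ s : Fin (n + 1) → S, h (s 0) * ∏ t : Fin n, q t (s t.castSucc) (s t.succ)
      = ∑ x, h x := by
  induction n generalizing h with
  | zero =>
      rw [← Fintype.sum_equiv (Equiv.funUnique (Fin 1) S).symm _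
        (fun s => h (s 0) * ∏ t : Fin 0, q t (s t.castSucc) (s t.succ)) (fun x => rfl)]
      simp
  | succ n ih =>
      have key : ∀ (x : S) (s' : Fin (n+1) → S),
          h ((Fin.cons x s' : Fin (n+2) → S) 0) *
            ∏ t : Fin (n+1), q t ((Fin.cons x s' : Fin (n+2) → S) t.castSucc)
              ((Fin.cons x s' : Fin (n+2) → S) t.succ)
          = h x * (q 0 x (s' 0) * ∏ t : Fin n, q t.succ (s' t.castSucc) (s' t.succ)) := by
        intro x s'
        rw [Fin.prod_univ_succ]
        simp [Fin.cons_zero, Fin.cons_succ, ← Fin.succ_castSucc]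
      rw [← Fintype.sum_equiv (Fin.consEquiv (fun _ : Fin (n+2) => S)) _
        (fun s : Fin (n+2) → S => h (s 0) * ∏ t : Fin (n+1), q t (s t.castSucc) (s t.succ))
        (fun x => rfl), Fintype.sum_prod_type]
      simp only [Fin.consEquiv_apply]
      calc ∑ x, ∑ s' : Fin (n+1) → S,
              h ((Fin.cons x s' : Fin (n+2) → S) 0) *
                ∏ t : Fin (n+1), q t ((Fin.cons x s' : Fin (n+2) → S) t.castSucc)
                  ((Fin.cons x s' : Fin (n+2) → S) t.succ)
          = ∑ x, h x * ∑ s' : Fin (n+1) → S,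
              q 0 x (s' 0) * ∏ t : Fin n, q t.succ (s' t.castSucc) (s' t.succ) := by
            simp only [key, Finset.mul_sum]
        _ = ∑ x, h x * ∑ y, q 0 x y := by
            refine Finset.sum_congr rfl fun x _ => ?_
            rw [ih (fun t => q t.succ) (fun t x => hq t.succ x) (q 0 x)]
        _ = ∑ x, h x := by simp [hq]

theorem symmetry_attack_is_undetectable (T : ℕ) (S A : Type)
    [Fintype S] [Nonempty S] [Fintype A] [Nonempty A]
    (p0 : PMF S) (p : S → A → PMF S) (σ : S → S) (hσ : p0.map σ = p0)
    (π : Pol T S A) (o : Fin (T + 1) → S) (a : Fin (T + 1) → A) :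
    ∑ s : Fin (T + 1) → S, rhoA p0 p (advSigma p σ) π s o a = rhoV p0 p π o a := by
  classical
  set C : ENNReal := π 0 (upTo o 0) (below a 0) (a 0) *
      ∏ t : Fin T, (p (o t.castSucc) (a t.castSucc) (o t.succ) *
        π t.succ (upTo o t.succ) (below a t.succ) (a t.succ)) with hC
  have hA : ∀ s : Fin (T+1) → S, rhoA p0 p (advSigma p σ) π s o a =
      C * ((p0 (s 0) * (if o 0 = σ (s 0) then 1 else 0)) *
        ∏ t : Fin T, p (s t.castSucc) (a t.castSucc) (s t.succ)) := by
    intro s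
    rw [rhoA, Fin.prod_univ_succ, hC]
    have h0 : (if (0 : Fin (T+1)).1 = 0 then p0 (s 0)
          else p (s ⟨(0 : Fin (T+1)).1 - 1, by omega⟩) (a ⟨(0 : Fin (T+1)).1 - 1, by omega⟩) (s 0)) *
        advSigma p σ 0 (upTo s 0) (below o 0) (below a 0) (o 0) *
        π 0 (upTo o 0) (below a 0) (a 0)
        = p0 (s 0) * (if o 0 = σ (s 0) then 1 else 0) * π 0 (upTo o 0) (below a 0) (a 0) := by
      simp [advSigma, upTo, PMF.pure_apply, Fin.last]
    have hsucc : ∀ t : Fin T,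
        (if (t.succ : Fin (T+1)).1 = 0 then p0 (s t.succ)
          else p (s ⟨(t.succ : Fin (T+1)).1 - 1, by have := t.succ.2; omega⟩)
            (a ⟨(t.succ : Fin (T+1)).1 - 1, by have := t.succ.2; omega⟩) (s t.succ)) *
        advSigma p σ t.succ (upTo s t.succ) (below o t.succ) (below a t.succ) (o t.succ) *
        π t.succ (upTo o t.succ) (below a t.succ) (a t.succ)
        = p (s t.castSucc) (a t.castSucc) (s t.succ) *
          (p (o t.castSucc) (a t.castSucc) (o t.succ) *
            π t.succ (upTo o t.succ) (below a t.succ) (a t.succ)) := by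
      intro t
      have hv : (t.succ : Fin (T+1)).1 = t.1 + 1 := rfl
      have hmk : (⟨(t.succ : Fin (T+1)).1 - 1, by have := t.succ.2; omega⟩ : Fin (T+1)) = t.castSucc := by
        ext; simp [hv]
      have hmk2 : ∀ (X : Type) (x : Fin (T+1) → X),
          below x t.succ ⟨(t.succ : Fin (T+1)).1 - 1, by omega⟩ = x t.castSucc := by
        intro X x
        simp only [below]
        congr 1
      rw [advSigma]
      rw [dif_neg (by simp [hv])]
      rw [hmk, hmk2 S o, hmk2 A a, if_neg (by simp [hv])]
      ring
    have hp : (∏ t : Fin T,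
        ((if (t.succ : Fin (T+1)).1 = 0 then p0 (s t.succ)
          else p (s ⟨(t.succ : Fin (T+1)).1 - 1, by have := t.succ.2; omega⟩)
            (a ⟨(t.succ : Fin (T+1)).1 - 1, by have := t.succ.2; omega⟩) (s t.succ)) *
        advSigma p σ t.succ (upTo s t.succ) (below o t.succ) (below a t.succ) (o t.succ) *
        π t.succ (upTo o t.succ) (below a t.succ) (a t.succ)))
        = ∏ t : Fin T, (p (s t.castSucc) (a t.castSucc) (s t.succ) *
          (p (o t.castSucc) (a t.castSucc) (o t.succ) *
            π t.succ (upTo o t.succ) (below a t.succ) (a t.succ))) :=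
      Finset.prod_congr rfl (fun t _ => hsucc t)
    rw [h0, hp, Finset.prod_mul_distrib]
    ring
  have hchain := chain_sum T (fun t x y => p x (a t.castSucc) y)
    (fun t x => by rw [← tsum_fintype (L := SummationFilter.unconditional _)]; exact (p x (a t.castSucc)).tsum_coe)
    (fun x => p0 x * (if o 0 = σ x then 1 else 0))
  have hmap : ∑ x, p0 x * (if o 0 = σ x then 1 else 0) = p0 (o 0) := by
    have hm := PMF.map_apply σ p0 (o 0)
    rw [hσ, tsum_fintype] at hm
    rw [hm]
    exact Finset.sum_congr rfl fun x _ => by split <;> simp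
  have hV : rhoV p0 p π o a = C * p0 (o 0) := by
    rw [rhoV, Fin.prod_univ_succ, hC]
    have h0' : (if (0 : Fin (T+1)).1 = 0 then p0 (o 0)
          else p (o ⟨(0 : Fin (T+1)).1 - 1, by omega⟩) (a ⟨(0 : Fin (T+1)).1 - 1, by omega⟩) (o 0)) *
        π 0 (upTo o 0) (below a 0) (a 0)
        = p0 (o 0) * π 0 (upTo o 0) (below a 0) (a 0) := by simp
    have hs' : ∀ t : Fin T,
        (if (t.succ : Fin (T+1)).1 = 0 then p0 (o t.succ)
          else p (o ⟨(t.succ : Fin (T+1)).1 - 1, by have := t.succ.2; omega⟩)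
            (a ⟨(t.succ : Fin (T+1)).1 - 1, by have := t.succ.2; omega⟩) (o t.succ)) *
        π t.succ (upTo o t.succ) (below a t.succ) (a t.succ)
        = p (o t.castSucc) (a t.castSucc) (o t.succ) *
          π t.succ (upTo o t.succ) (below a t.succ) (a t.succ) := by
      intro t
      have hv : (t.succ : Fin (T+1)).1 = t.1 + 1 := rfl
      have hmk : (⟨(t.succ : Fin (T+1)).1 - 1, by have := t.succ.2; omega⟩ : Fin (T+1)) = t.castSucc := by
        ext; simp [hv]
      rw [if_neg (by simp [hv]), hmk]
    rw [h0', Finset.prod_congr rfl (fun t _ => hs' t)]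
    ring
  calc ∑ s : Fin (T + 1) → S, rhoA p0 p (advSigma p σ) π s o a
      = ∑ s : Fin (T + 1) → S, C * ((p0 (s 0) * (if o 0 = σ (s 0) then 1 else 0)) *
          ∏ t : Fin T, p (s t.castSucc) (a t.castSucc) (s t.succ)) :=
        Finset.sum_congr rfl fun s _ => hA s
    _ = C * ∑ s : Fin (T + 1) → S, ((p0 (s 0) * (if o 0 = σ (s 0) then 1 else 0)) *
          ∏ t : Fin T, p (s t.castSucc) (a t.castSucc) (s t.succ)) := by
        rw [Finset.mul_sum]
    _ = C * p0 (o 0) := by rw [hchain, hmap]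
    _ = rhoV p0 p π o a := hV.symm
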